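/- Let X be a real Banach space, let f : X → ℝ be quasiconvex, and let m ∈ ℝ be the topological essential infimum of f. If x ∈ X satisfies f(x) = m and f is Gâteaux differentiable at x with derivative L, then L = 0. -/

import Mathlib

open Filter Topology Set MeasureTheory

/-- `f` is quasiconvex: `f (l•x + (1-l)•y) ≤ max (f x) (f y)` for `l ∈ [0,1]`. -/
def QuasiconvexFun {X : Type*} [AddCommGroup X] [Module ℝ X] (f : X → ℝ) : Prop :=
  ∀ x y : X, ∀ l : ℝ, l ∈ Set.Icc (0 : ℝ) 1 →
    f (l • x + (1 - l) • y) ≤ max (f x) (f y)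

/-- `f` is strictly quasiconvex. -/
def StrictlyQuasiconvexFun {X : Type*} [AddCommGroup X] [Module ℝ X] (f : X → ℝ) : Prop :=
  ∀ x y : X, x ≠ y → ∀ l : ℝ, l ∈ Set.Ioo (0 : ℝ) 1 →
    f (l • x + (1 - l) • y) < max (f x) (f y)

/-- `f` is densely continuous: its set of points of continuity is dense. -/
def DenselyContinuous {X : Type*} [TopologicalSpace X] (f : X → ℝ) : Prop :=
  Dense {x : X | ContinuousAt f x}

/-- `m` is the topological essential infimum of `f`: the strict sublevel set `{f < α}`
is meager for `α < m` and nonmeager for `α > m`. -/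
def IsTopEssInf {X : Type*} [TopologicalSpace X] (f : X → ℝ) (m : ℝ) : Prop :=
  (∀ α : ℝ, α < m → IsMeagre {x : X | f x < α}) ∧
  (∀ α : ℝ, m < α → ¬ IsMeagre {x : X | f x < α})

/-- Aronszajn null set: a Borel set `N` such that for every sequence `ξ` with dense linear
span, `N` decomposes as a countable union of Borel sets, the `n`-th of which has Lebesgue
null intersection with every line of direction `ξ n`. -/
def AronszajnNull {X : Type*} [NormedAddCommGroup X] [NormedSpace ℝ X]
    [MeasurableSpace X] (N : Set X) : Prop :=
  MeasurableSet N ∧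
  ∀ ξ : ℕ → X, Dense (Submodule.span ℝ (Set.range ξ) : Set X) →
    ∃ Nn : ℕ → Set X, N = ⋃ n, Nn n ∧
      ∀ n, MeasurableSet (Nn n) ∧
        ∀ x : X, MeasureTheory.volume {t : ℝ | x + t • ξ n ∈ Nn n} = 0

/-- Haar null set: `E` is contained in a Borel set `B` for which there is a Borel
probability measure vanishing on all translates of `B`. -/
def HaarNull {X : Type*} [AddCommGroup X] [TopologicalSpace X]
    [MeasurableSpace X] (E : Set X) : Prop :=
  ∃ B : Set X, E ⊆ B ∧ MeasurableSet B ∧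
    ∃ μ : MeasureTheory.Measure X, MeasureTheory.IsProbabilityMeasure μ ∧
      ∀ x : X, μ ((fun y => x + y) '' B) = 0

/-- Hadamard differentiability of `f` at `x`. -/
def HadamardDiffAt {X : Type*} [NormedAddCommGroup X] [NormedSpace ℝ X]
    (f : X → ℝ) (x : X) : Prop :=
  ∃ L : X →L[ℝ] ℝ, ∀ h : X, ∀ t : ℕ → ℝ, (∀ n, t n ≠ 0) →
    Tendsto t atTop (𝓝 0) → ∀ hs : ℕ → X, Tendsto hs atTop (𝓝 h) →
      Tendsto (fun n => (f (x + t n • hs n) - f x) / t n) atTop (𝓝 (L h))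

/-- Hadamard differentiability at `x` of a function whose relevant values are those on `V`. -/
def HadamardDiffWithinAt {X : Type*} [NormedAddCommGroup X] [NormedSpace ℝ X]
    (f : X → ℝ) (V : Set X) (x : X) : Prop :=
  ∃ L : X →L[ℝ] ℝ, ∀ h : X, ∀ t : ℕ → ℝ, (∀ n, t n ≠ 0) →
    Tendsto t atTop (𝓝 0) → ∀ hs : ℕ → X, Tendsto hs atTop (𝓝 h) →
      (∀ n, x + t n • hs n ∈ V) →
      Tendsto (fun n => (f (x + t n • hs n) - f x) / t n) atTop (𝓝 (L h))

/-- Gâteaux differentiability of `f` at `x` with derivative `L`. -/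
def GateauxDiffAt {X : Type*} [NormedAddCommGroup X] [NormedSpace ℝ X]
    (f : X → ℝ) (x : X) (L : X →L[ℝ] ℝ) : Prop :=
  ∀ h : X, Tendsto (fun t : ℝ => (f (x + t • h) - f x) / t) (𝓝[≠] 0) (𝓝 (L h))

/-- Essential Gâteaux differentiability of `f` at `x`: directional derivatives exist and
are given by a continuous linear functional for a comeager (residual) set of directions
in the unit sphere. -/
def EssGateauxDiffAt {X : Type*} [NormedAddCommGroup X] [NormedSpace ℝ X]
    (f : X → ℝ) (x : X) : Prop :=
  ∃ L : X →L[ℝ] ℝ, ∃ Ω : Set (Metric.sphere (0 : X) 1), IsMeagre Ωᶜ ∧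
    ∀ h ∈ Ω, Tendsto (fun t : ℝ => (f (x + t • (h : X)) - f x) / t) (𝓝[≠] 0) (𝓝 (L (h : X)))

/-- `K` is a closed convex cone. -/
def IsClosedConvexCone {X : Type*} [NormedAddCommGroup X] [NormedSpace ℝ X] (K : Set X) : Prop :=
  IsClosed K ∧ Convex ℝ K ∧ ∀ l : ℝ, 0 ≤ l → ∀ k ∈ K, l • k ∈ K

/-- `f` is `K`-nondecreasing on `U`. -/
def KNondecreasingOn {X : Type*} [AddCommGroup X] [Module ℝ X]
    (f : X → ℝ) (K U : Set X) : Prop :=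
  ∀ u ∈ U, ∀ k ∈ K, k ≠ 0 → u + k ∈ U → f u ≤ f (u + k)

/-- Ideally convex subset: stable under infinite convex combinations of bounded sequences. -/
def IdeallyConvex {X : Type*} [NormedAddCommGroup X] [NormedSpace ℝ X] (C : Set X) : Prop :=
  ∀ (x : ℕ → X) (lam : ℕ → ℝ), (∀ n, x n ∈ C) → Bornology.IsBounded (Set.range x) →
    (∀ n, lam n ∈ Set.Icc (0 : ℝ) 1) → HasSum lam 1 →
      ∑' n, lam n • x n ∈ C

/-- `C‡`: the union, over finite dimensional subspaces `Z ⊆ X`, of the closures of `C ∩ Z`. -/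
def Ddag {X : Type*} [NormedAddCommGroup X] [NormedSpace ℝ X] (C : Set X) : Set X :=
  ⋃ (Z : Submodule ℝ X) (_ : FiniteDimensional ℝ Z), closure (C ∩ (Z : Set X))

/-- A normed space is reflexive if the canonical inclusion into its double dual is onto. -/
def IsReflexiveSpace (X : Type*) [NormedAddCommGroup X] [NormedSpace ℝ X] : Prop :=
  Function.Surjective (NormedSpace.inclusionInDoubleDual ℝ X)

/-- If a quasiconvex function is Gâteaux differentiable at a point where it equals its
topological essential infimum, the derivative vanishes. -/
theorem stmt_12 {X : Type*} [NormedAddCommGroup X] [NormedSpace ℝ X] [CompleteSpace X]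
    (f : X → ℝ) (hq : QuasiconvexFun f) (m : ℝ) (hm : IsTopEssInf f m)
    (x : X) (hx : f x = m) (L : X →L[ℝ] ℝ) (hL : GateauxDiffAt f x L) :
    L = 0 := by
  -- The strict sublevel set at level `m` is meager.
  have hMm : IsMeagre {z : X | f z < m} := by
    have hsub : {z : X | f z < m} ⊆ ⋃ n : ℕ, {z : X | f z < m - 1 / (n + 1)} := by
      intro z hz
      obtain ⟨n, hn⟩ := exists_nat_one_div_lt (K := ℝ) (sub_pos.2 hz)
      exact Set.mem_iUnion.2 ⟨n, by simp only [Set.mem_setOf_eq]; linarith⟩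
    refine (isMeagre_iUnion fun n => hm.1 _ ?_).mono hsub
    have h1 : (0 : ℝ) < 1 / ((n : ℝ) + 1) := by positivity
    linarith
  -- No direction of strict descent exists.
  have key : ∀ k : X, ¬ (L k < 0) := by
    intro k hk
    -- For each positive rational `q`, the preimage of `{f < m}` under `v ↦ x + q • v`
    -- is meager (the map is a homeomorphism, hence continuous and open).
    set N : {q : ℚ // 0 < q} → Set X :=
      fun q => (fun v : X => x + (q.1 : ℝ) • v) ⁻¹' {z : X | f z < m} with hNdef
    have hN : ∀ q : {q : ℚ // 0 < q}, IsMeagre (N q) := by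
      intro q
      have hq0 : ((q.1 : ℝ)) ≠ 0 := by
        have := q.2
        positivity
      have hcont : Continuous fun v : X => x + (q.1 : ℝ) • v :=
        continuous_const.add (continuous_const_smul _)
      have hopen : IsOpenMap fun v : X => x + (q.1 : ℝ) • v :=
        (Homeomorph.addLeft x).isOpenMap.comp (isOpenMap_smul₀ hq0)
      exact hMm.preimage_of_isOpenMap hcont hopen
    -- The union over positive rationals is meager.
    have hUnion : IsMeagre (⋃ q : {q : ℚ // 0 < q}, N q) := by
      rw [IsMeagre, Set.compl_iUnion]
      exact countable_iInter_mem.2 fun q => hN q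
    -- The open set of descent directions is contained in this union.
    have hcover : {v : X | L v < 0} ⊆ ⋃ q : {q : ℚ // 0 < q}, N q := by
      intro v hv
      have hev : ∀ᶠ t in 𝓝[≠] (0 : ℝ), (f (x + t • v) - f x) / t < 0 :=
        (hL v).eventually (gt_mem_nhds hv)
      rw [Filter.Eventually, Metric.mem_nhdsWithin_iff] at hev
      obtain ⟨ε, hε, hball⟩ := hev
      obtain ⟨q, hq0, hqε⟩ := exists_rat_btwn hε
      have hq0' : (0 : ℝ) < (q : ℝ) := hq0
      have hqmem : (q : ℝ) ∈ Metric.ball (0 : ℝ) ε ∩ {(0 : ℝ)}ᶜ := by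
        constructor
        · rw [Metric.mem_ball, Real.dist_eq, sub_zero, abs_of_pos hq0']
          exact hqε
        · exact fun h => hq0'.ne' (Set.mem_singleton_iff.mp h)
      have hlt : (f (x + (q : ℝ) • v) - f x) / (q : ℝ) < 0 := hball hqmem
      have hnum : f (x + (q : ℝ) • v) - f x < 0 := by
        by_contra hge
        push_neg at hge
        exact absurd (div_nonneg hge (le_of_lt hq0')) (not_le.2 hlt)
      refine Set.mem_iUnion.2 ⟨⟨q, by exact_mod_cast hq0⟩, ?_⟩
      simp only [hNdef, Set.mem_preimage, Set.mem_setOf_eq]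
      linarith [hx ▸ hnum]
    have hOmeagre : IsMeagre {v : X | L v < 0} := hUnion.mono hcover
    -- But a nonempty open set in a Baire space is nonmeager.
    have hOopen : IsOpen {v : X | L v < 0} := isOpen_lt L.continuous continuous_const
    have hdense : Dense ({v : X | L v < 0}ᶜ) := dense_of_mem_residual hOmeagre
    obtain ⟨w, hw1, hw2⟩ := hdense.inter_open_nonempty _ hOopen ⟨k, hk⟩
    exact hw2 hw1
  -- Conclude `L = 0`.
  ext k
  have h1 : ¬ (L k < 0) := key k
  have h2 : ¬ (L (-k) < 0) := key (-k)
  rw [map_neg] at h2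
  push_neg at h1 h2
  have : L k = 0 := le_antisymm (by linarith) h1
  simpa using this
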